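/- Let σ, τ : ℝ → ℝ³ satisfy ⟨σ', τ⟩ = 0, ⟨τ, τ⟩ = 1, ⟨τ', τ'⟩ = 1, and suppose (σ', τ, σ'') = 0 identically (so σ'' lies in span{τ, σ'} where σ' ≠ 0). Writing σ'' = σ₃ τ + σ₄ σ', and setting λ(s) := ⟨σ'(s), τ'(s)⟩, assume λ(s) ≠ 0 for all s and τ'' = -τ. Then σ₃ = -λ and σ₄ = λ'/λ. -/

import Mathlib

open Matrix

lemma hasDerivAt_dot {f g : ℝ → (Fin 3 → ℝ)} {f' g' : Fin 3 → ℝ} {s : ℝ}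
    (hf : HasDerivAt f f' s) (hg : HasDerivAt g g' s) :
    HasDerivAt (fun r => f r ⬝ᵥ g r) (f' ⬝ᵥ g s + f s ⬝ᵥ g') s := by
  have h1 := hasDerivAt_pi.mp hf
  have h2 := hasDerivAt_pi.mp hg
  have : HasDerivAt (fun r => ∑ i, f r i * g r i)
      (∑ i, (f' i * g s i + f s i * g' i)) s :=
    HasDerivAt.fun_sum fun i _ => (h1 i).mul (h2 i)
  simpa [dotProduct, Finset.sum_add_distrib] using this

theorem stmt_4 (σ τ : ℝ → (Fin 3 → ℝ)) (σ₃ σ₄ : ℝ → ℝ)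
    (hσ : ContDiff ℝ 2 σ) (hτ : ContDiff ℝ 2 τ)
    (horth : ∀ s, deriv σ s ⬝ᵥ τ s = 0)
    (hunit : ∀ s, τ s ⬝ᵥ τ s = 1)
    (hunit' : ∀ s, deriv τ s ⬝ᵥ deriv τ s = 1)
    (htriple : ∀ s, crossProduct (deriv σ s) (τ s) ⬝ᵥ deriv (deriv σ) s = 0)
    (hσ'ne : ∀ s, deriv σ s ≠ 0)
    (hdec : ∀ s, deriv (deriv σ) s = σ₃ s • τ s + σ₄ s • deriv σ s)
    (hlam : ∀ s, deriv σ s ⬝ᵥ deriv τ s ≠ 0)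
    (hτ'' : ∀ s, deriv (deriv τ) s = -τ s) :
    (∀ s, σ₃ s = -(deriv σ s ⬝ᵥ deriv τ s)) ∧
    (∀ s, σ₄ s = deriv (fun r => deriv σ r ⬝ᵥ deriv τ r) s / (deriv σ s ⬝ᵥ deriv τ s)) := by
  rw [show (2 : WithTop ℕ∞) = 1 + 1 from rfl] at hσ hτ
  have hσd := contDiff_succ_iff_deriv.mp hσ
  have hτd := contDiff_succ_iff_deriv.mp hτ
  have hσ1 : ∀ s, HasDerivAt σ (deriv σ s) s := fun s => (hσd.1 s).hasDerivAt
  have hτ1 : ∀ s, HasDerivAt τ (deriv τ s) s := fun s => (hτd.1 s).hasDerivAt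
  have hσ2 : ∀ s, HasDerivAt (deriv σ) (deriv (deriv σ) s) s :=
    fun s => ((hσd.2.2.differentiable one_ne_zero) s).hasDerivAt
  have hτ2 : ∀ s, HasDerivAt (deriv τ) (deriv (deriv τ) s) s :=
    fun s => ((hτd.2.2.differentiable one_ne_zero) s).hasDerivAt
  -- ⟨τ', τ⟩ = 0
  have hττ' : ∀ s, deriv τ s ⬝ᵥ τ s = 0 := by
    intro s
    have h := hasDerivAt_dot (hτ1 s) (hτ1 s)
    have hc : deriv (fun r => τ r ⬝ᵥ τ r) s = 0 := by
      have : (fun r => τ r ⬝ᵥ τ r) = fun _ => (1:ℝ) := funext hunit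
      rw [this, deriv_const]
    rw [h.deriv] at hc
    have := dotProduct_comm (deriv τ s) (τ s)
    linarith [hc, this]
  -- ⟨σ'', τ⟩ + ⟨σ', τ'⟩ = 0
  have key1 : ∀ s, deriv (deriv σ) s ⬝ᵥ τ s + deriv σ s ⬝ᵥ deriv τ s = 0 := by
    intro s
    have h := hasDerivAt_dot (hσ2 s) (hτ1 s)
    have hc : deriv (fun r => deriv σ r ⬝ᵥ τ r) s = 0 := by
      have : (fun r => deriv σ r ⬝ᵥ τ r) = fun _ => (0:ℝ) := funext horth
      rw [this, deriv_const]
    rw [h.deriv] at hc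
    linarith [hc]
  have h3 : ∀ s, σ₃ s = -(deriv σ s ⬝ᵥ deriv τ s) := by
    intro s
    have := key1 s
    rw [hdec s, add_dotProduct, smul_dotProduct, smul_dotProduct, smul_eq_mul,
      smul_eq_mul, hunit s, horth s] at this
    linarith
  refine ⟨h3, fun s => ?_⟩
  -- λ' = σ₄ λ
  have hderL : deriv (fun r => deriv σ r ⬝ᵥ deriv τ r) s
      = σ₄ s * (deriv σ s ⬝ᵥ deriv τ s) := by
    have h := hasDerivAt_dot (hσ2 s) (hτ2 s)
    rw [h.deriv, hdec s, hτ'' s]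
    have hcomm : τ s ⬝ᵥ deriv τ s = 0 := by
      rw [dotProduct_comm]; exact hττ' s
    simp [add_dotProduct, smul_dotProduct, dotProduct_neg, hcomm, horth s, smul_eq_mul]
  rw [hderL, mul_div_assoc, div_self (hlam s), mul_one]
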